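/- arXiv:1801.07191 — 7 statements merged into one kernel-verified Lean document; each statement's English description precedes it below -/
import Mathlib

section
/- Let X be a pre-Riesz space with vector lattice cover (Y, i), and let S ⊆ X be non-empty. Then i(𝓘_S) ⊆ 𝓘_{i(S)} ∩ i(X), where 𝓘_S denotes the ideal generated by S in X and 𝓘_{i(S)} the ideal generated by i(S) in Y. -/
open Set

section Defs

variable {Z : Type*} [AddCommGroup Z] [PartialOrder Z] [Module ℝ Z]

/-- Set of common upper bounds of `x` and `-x`. -/
def pmUB (x : Z) : Set Z := upperBounds {x, -x}

/-- Disjointness in an ordered vector space: `{±(x+y)}ᵘ = {±(x−y)}ᵘ`. -/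
def Disj (x y : Z) : Prop :=
  upperBounds {x + y, -(x + y)} = upperBounds {x - y, -(x - y)}

/-- Disjoint complement of a set. -/
def dcomp (M : Set Z) : Set Z := {x : Z | ∀ y ∈ M, Disj x y}

/-- `D` is a linear subspace. -/
def IsSubsp (D : Set Z) : Prop :=
  (0 : Z) ∈ D ∧ (∀ x ∈ D, ∀ y ∈ D, x + y ∈ D) ∧ ∀ (r : ℝ), ∀ x ∈ D, r • x ∈ D

/-- A band is a linear subspace `B` with `Bᵈᵈ = B`. -/
def IsBand (B : Set Z) : Prop := IsSubsp B ∧ dcomp (dcomp B) = B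

/-- `M` is solid: `{±y}ᵘ ⊆ {±x}ᵘ` with `y ∈ M` implies `x ∈ M`. -/
def IsSolid (M : Set Z) : Prop := ∀ x : Z, ∀ y ∈ M, pmUB y ⊆ pmUB x → x ∈ M

/-- An ideal is a solid linear subspace. -/
def IsIdeal (I : Set Z) : Prop := IsSubsp I ∧ IsSolid I

/-- The ideal generated by `S`. -/
def idealGen (S : Set Z) : Set Z := ⋂₀ {I : Set Z | IsIdeal I ∧ S ⊆ I}

/-- The band generated by `S`. -/
def bandGen (S : Set Z) : Set Z := ⋂₀ {B : Set Z | IsBand B ∧ S ⊆ B}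

/-- A subset is directed if any two elements have a common upper bound in it. -/
def IsDirectedSet (D : Set Z) : Prop := ∀ x ∈ D, ∀ y ∈ D, ∃ z ∈ D, x ≤ z ∧ y ≤ z

/-- `D` is order dense in `E` (infima taken within `E`): every `y ∈ E` is the
infimum, computed in `E`, of `{w ∈ D | y ≤ w}`. -/
def OrderDenseIn (D E : Set Z) : Prop :=
  ∀ y ∈ E, y ∈ lowerBounds {w : Z | w ∈ D ∧ y ≤ w} ∧
    ∀ z ∈ E, z ∈ lowerBounds {w : Z | w ∈ D ∧ y ≤ w} → z ≤ y

/-- `D` is majorizing in `E`. -/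
def MajorizingIn (D E : Set Z) : Prop := ∀ y ∈ E, ∃ d ∈ D, y ≤ d

end Defs

section Aux

variable {Z : Type*} [AddCommGroup Z] [PartialOrder Z] [Module ℝ Z]

lemma mem_pmUB' {x u : Z} : u ∈ pmUB x ↔ x ≤ u ∧ -x ≤ u := by
  constructor
  · intro h; exact ⟨h (by simp), h (by simp)⟩
  · rintro ⟨h1, h2⟩ a ha
    rcases ha with rfl | ha
    · exact h1
    · simp only [Set.mem_singleton_iff] at ha; subst ha; exact h2

lemma isIdeal_idealGen (S : Set Z) : IsIdeal (idealGen S) := by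
  refine ⟨⟨?_, ?_, ?_⟩, ?_⟩
  · exact fun I hI => hI.1.1.1
  · intro x hx y hy I hI; exact hI.1.1.2.1 x (hx I hI) y (hy I hI)
  · intro r x hx I hI; exact hI.1.1.2.2 r x (hx I hI)
  · intro x y hy h I hI; exact hI.1.2 x y (hy I hI) h

lemma subset_idealGen (S : Set Z) : S ⊆ idealGen S :=
  fun _ hx I hI => hI.2 hx

lemma idealGen_subset {S I : Set Z} (hI : IsIdeal I) (hS : S ⊆ I) :
    idealGen S ⊆ I := fun _ hx => hx I ⟨hI, hS⟩

end Aux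

/-- For a pre-Riesz space X with vector lattice cover (Y, i) and non-empty S ⊆ X:
i(𝓘_S) ⊆ 𝓘_{i(S)} ∩ i(X). -/
theorem stmt_7 {X Y : Type*} [AddCommGroup X] [PartialOrder X] [CovariantClass X X (· + ·) (· ≤ ·)] [Module ℝ X] [PosSMulMono ℝ X] [AddCommGroup Y] [Lattice Y] [CovariantClass Y Y (· + ·) (· ≤ ·)] [Module ℝ Y] [PosSMulMono ℝ Y]
    (i : X →ₗ[ℝ] Y) (hbi : ∀ x : X, 0 ≤ i x ↔ 0 ≤ x)
    (hdense : ∀ y : Y, IsGLB {z : Y | z ∈ Set.range i ∧ y ≤ z} y)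
    (S : Set X) (hne : S.Nonempty) :
    i '' idealGen S ⊆ idealGen (i '' S) ∩ Set.range i := by
  have hmono : ∀ a b : X, a ≤ b ↔ i a ≤ i b := by
    intro a b
    rw [← sub_nonneg, ← sub_nonneg (a := i b), ← map_sub, hbi]
  set J := idealGen (i '' S) with hJdef
  have hJ : IsIdeal J := isIdeal_idealGen _
  have key : ∀ x y : X, pmUB y ⊆ pmUB x → pmUB (i y) ⊆ pmUB (i x) := by
    intro x y h u hu
    rw [mem_pmUB'] at hu
    have hglb := hdense u
    have hlb : ∀ w : X, u ≤ i w → x ≤ w ∧ -x ≤ w := by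
      intro w hz
      have hw : w ∈ pmUB y := by
        rw [mem_pmUB']
        refine ⟨(hmono y w).2 (hu.1.trans hz), ?_⟩
        have h2 : i (-y) ≤ i w := by rw [map_neg]; exact hu.2.trans hz
        exact (hmono _ _).2 h2
      have hx := h hw
      rw [mem_pmUB'] at hx
      exact hx
    rw [mem_pmUB']
    constructor
    · refine hglb.2 ?_
      rintro z ⟨⟨w, rfl⟩, hz⟩
      exact (hmono x w).1 (hlb w hz).1
    · have : i (-x) ≤ u := by
        refine hglb.2 ?_
        rintro z ⟨⟨w, rfl⟩, hz⟩
        exact (hmono (-x) w).1 (hlb w hz).2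
      rwa [map_neg] at this
  have hpre : IsIdeal (i ⁻¹' J) := by
    refine ⟨⟨?_, ?_, ?_⟩, ?_⟩
    · show i 0 ∈ J; rw [map_zero]; exact hJ.1.1
    · intro a ha b hb; show i (a + b) ∈ J; rw [map_add]
      exact hJ.1.2.1 _ ha _ hb
    · intro r a ha; show i (r • a) ∈ J; rw [map_smul]
      exact hJ.1.2.2 r _ ha
    · intro a b hb hsub; exact hJ.2 (i a) (i b) hb (key a b hsub)
  have hS : S ⊆ i ⁻¹' J := fun s hs => subset_idealGen _ ⟨s, hs, rfl⟩
  rintro _ ⟨x, hx, rfl⟩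
  exact ⟨idealGen_subset hpre hS hx, x, rfl⟩
end

section
/- Let X be a pre-Riesz space with vector lattice cover (Y, i) and let I ⊆ X be an ideal. Then I is directed if and only if i(I) is majorizing in the ideal 𝓘_{i(I)} generated by i(I) in Y. -/
open Set

section Aux

variable {Y : Type*} [AddCommGroup Y] [Lattice Y] [CovariantClass Y Y (· + ·) (· ≤ ·)]

lemma mem_pmUB_iff {a w : Y} : w ∈ pmUB a ↔ |a| ≤ w := by
  constructor
  · intro h
    exact abs_le'.2 ⟨h (by simp [Set.mem_insert_iff]), h (by simp [Set.mem_insert_iff])⟩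
  · intro h z hz
    rcases hz with rfl | hz
    · exact le_trans (le_abs_self _) h
    · simp only [Set.mem_singleton_iff] at hz
      subst hz
      exact le_trans (neg_le_abs _) h

lemma pmUB_subset_iff {a b : Y} : pmUB b ⊆ pmUB a ↔ |a| ≤ |b| := by
  constructor
  · intro h
    exact mem_pmUB_iff.1 (h (mem_pmUB_iff.2 le_rfl))
  · intro h w hw
    exact mem_pmUB_iff.2 (le_trans h (mem_pmUB_iff.1 hw))

end Aux

/-- An ideal I in a pre-Riesz space is directed iff i(I) is majorizing in the
ideal generated by i(I) in a vector lattice cover. -/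
theorem stmt_9 {X Y : Type*} [AddCommGroup X] [PartialOrder X] [CovariantClass X X (· + ·) (· ≤ ·)] [Module ℝ X] [PosSMulMono ℝ X] [AddCommGroup Y] [Lattice Y] [CovariantClass Y Y (· + ·) (· ≤ ·)] [Module ℝ Y] [PosSMulMono ℝ Y]
    (i : X →ₗ[ℝ] Y) (hbi : ∀ x : X, 0 ≤ i x ↔ 0 ≤ x)
    (hdense : ∀ y : Y, IsGLB {z : Y | z ∈ Set.range i ∧ y ≤ z} y)
    (I : Set X) (hI : IsIdeal I) :
    IsDirectedSet I ↔ MajorizingIn (i '' I) (idealGen (i '' I)) := by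
  
  have himono : ∀ {a b : X}, a ≤ b → i a ≤ i b := by
    intro a b h
    have h0 : (0:Y) ≤ i (b - a) := (hbi _).2 (sub_nonneg.2 h)
    rw [map_sub] at h0
    exact sub_nonneg.1 h0
  have hirefl : ∀ {a b : X}, i a ≤ i b → a ≤ b := by
    intro a b h
    have h0 : (0:Y) ≤ i b - i a := sub_nonneg.2 h
    rw [← map_sub] at h0
    exact sub_nonneg.1 ((hbi _).1 h0)
  constructor
  · -- directed → majorizing
    intro hdir
    -- the candidate ideal
    set J : Set Y := {y : Y | ∃ d ∈ I, |y| ≤ i d} with hJ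
    have hJideal : IsIdeal J := by
      constructor
      · refine ⟨⟨0, hI.1.1, by simp⟩, ?_, ?_⟩
        · rintro y ⟨d, hd, hyd⟩ y' ⟨d', hd', hyd'⟩
          refine ⟨d + d', hI.1.2.1 d hd d' hd', ?_⟩
          rw [map_add]
          exact le_trans (abs_add_le _ _) (add_le_add hyd hyd')
        · rintro r y ⟨d, hd, hyd⟩
          refine ⟨|r| • d, hI.1.2.2 |r| d hd, ?_⟩
          rw [map_smul]
          have hy1 : y ≤ i d := le_trans (le_abs_self _) hyd
          have hy2 : -y ≤ i d := le_trans (neg_le_abs _) hyd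
          rcases le_or_gt 0 r with hr | hr
          · rw [abs_of_nonneg hr]
            refine abs_le'.2 ⟨?_, ?_⟩
            · exact smul_le_smul_of_nonneg_left hy1 hr
            · rw [← smul_neg]
              exact smul_le_smul_of_nonneg_left hy2 hr
          · rw [abs_of_neg hr]
            refine abs_le'.2 ⟨?_, ?_⟩
            · have : r • y = (-r) • (-y) := by simp
              rw [this]
              exact smul_le_smul_of_nonneg_left hy2 (by linarith)
            · have : -(r • y) = (-r) • y := by simp
              rw [this]
              exact smul_le_smul_of_nonneg_left hy1 (by linarith)
      · rintro x y ⟨d, hd, hyd⟩ hsub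
        exact ⟨d, hd, le_trans (pmUB_subset_iff.1 hsub) hyd⟩
    have hsubJ : i '' I ⊆ J := by
      rintro _ ⟨x, hx, rfl⟩
      have hnx : -x ∈ I := by
        have := hI.1.2.2 (-1 : ℝ) x hx
        simpa using this
      obtain ⟨d, hd, hxd, hnxd⟩ := hdir x hx (-x) hnx
      refine ⟨d, hd, abs_le'.2 ⟨himono hxd, ?_⟩⟩
      have := himono hnxd
      rwa [map_neg] at this
    intro y hy
    have hyJ : y ∈ J := hy J ⟨hJideal, hsubJ⟩
    obtain ⟨d, hd, hyd⟩ := hyJ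
    exact ⟨i d, ⟨d, hd, rfl⟩, le_trans (le_abs_self _) hyd⟩
  · -- majorizing → directed
    intro hmaj x hx y hy
    have hu : i x ⊔ i y ∈ idealGen (i '' I) := by
      intro J hJ
      obtain ⟨⟨hJsub, hJsolid⟩, hJcont⟩ := hJ
      have hax : |i x| ∈ J := by
        refine hJsolid _ (i x) (hJcont ⟨x, hx, rfl⟩) ?_
        rw [pmUB_subset_iff, abs_abs]
      have hay : |i y| ∈ J := by
        refine hJsolid _ (i y) (hJcont ⟨y, hy, rfl⟩) ?_
        rw [pmUB_subset_iff, abs_abs]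
      have hsum : |i x| + |i y| ∈ J := hJsub.2.1 _ hax _ hay
      refine hJsolid _ _ hsum ?_
      rw [pmUB_subset_iff]
      have h1 : i x ⊔ i y ≤ |i x| + |i y| :=
        sup_le (le_trans (le_abs_self _) (le_add_of_nonneg_right (abs_nonneg _)))
          (le_trans (le_abs_self _) (le_add_of_nonneg_left (abs_nonneg _)))
      have h2 : -(i x ⊔ i y) ≤ |i x| + |i y| :=
        ((neg_sup (i x) (i y)).le.trans inf_le_left).trans
          ((neg_le_abs _).trans (le_add_of_nonneg_right (abs_nonneg _)))
      calc |i x ⊔ i y| ≤ |i x| + |i y| := abs_le'.2 ⟨h1, h2⟩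
        _ ≤ |(|i x| + |i y|)| := le_abs_self _
    obtain ⟨e, ⟨d, hd, rfl⟩, hue⟩ := hmaj _ hu
    exact ⟨d, hd, hirefl (le_trans le_sup_left hue), hirefl (le_trans le_sup_right hue)⟩
end

section
/- Let X be a fordable pre-Riesz space with vector lattice cover (Y, i), and let S ⊆ X be non-empty. Then the band 𝓑_{i(S)} = (i(S))ᵈᵈ generated by i(S) in Y is the smallest extension band of the band 𝓑_S = Sᵈᵈ generated by S in X, i.e., i⁻¹(𝓑_{i(S)}) = 𝓑_S and 𝓑_{i(S)} is contained in every band J ⊆ Y with i⁻¹(J) = 𝓑_S. -/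
open Set

section AuxGen

variable {Z : Type*} [AddCommGroup Z] [PartialOrder Z] [Module ℝ Z]

lemma disj_symm {x y : Z} (h : Disj x y) : Disj y x := by
  unfold Disj at h ⊢
  have hset : ({y - x, -(y - x)} : Set Z) = {x - y, -(x - y)} := by
    rw [← neg_sub x y, neg_neg, Set.pair_comm]
  rw [add_comm y x, hset]
  exact h

lemma dcomp_anti {A B : Set Z} (h : A ⊆ B) : dcomp B ⊆ dcomp A :=
  fun x hx y hy => hx y (h hy)

lemma subset_dcomp_dcomp (A : Set Z) : A ⊆ dcomp (dcomp A) :=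
  fun x hx y hy => disj_symm (hy x hx)

end AuxGen

section LatAux

variable {Y : Type*} [AddCommGroup Y] [Lattice Y]
  [CovariantClass Y Y (· + ·) (· ≤ ·)] [Module ℝ Y]

lemma ub_pair_eq_Ici (a : Y) : upperBounds {a, -a} = Set.Ici |a| := by
  ext z
  constructor
  · intro h
    exact Set.mem_Ici.2 (abs_le'.2 ⟨h (Set.mem_insert _ _), h (Set.mem_insert_of_mem _ rfl)⟩)
  · intro h w hw
    simp only [Set.mem_insert_iff, Set.mem_singleton_iff] at hw
    rcases hw with rfl | rfl
    · exact (le_abs_self _).trans h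
    · exact (neg_le_abs _).trans h

lemma disjY_iff (u v : Y) : Disj u v ↔ |u + v| = |u - v| := by
  unfold Disj
  rw [ub_pair_eq_Ici, ub_pair_eq_Ici]
  constructor
  · intro h
    have h1 : |u - v| ∈ Set.Ici |u + v| := by rw [h]; exact Set.self_mem_Ici
    have h2 : |u + v| ∈ Set.Ici |u - v| := by rw [← h]; exact Set.self_mem_Ici
    exact le_antisymm h1 h2
  · intro h; rw [h]

lemma absI1 (a b : Y) : |a + b| ⊔ |a - b| = |a| + |b| := by
  calc |a + b| ⊔ |a - b|
      = ((a + b) ⊔ -(a + b)) ⊔ ((a - b) ⊔ -(a - b)) := rfl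
    _ = ((a + b) ⊔ (a - b)) ⊔ (-(a + b) ⊔ -(a - b)) := sup_sup_sup_comm _ _ _ _
    _ = (a + (b ⊔ -b)) ⊔ (-a + (-b ⊔ b)) := by
        rw [neg_sub, neg_add, sub_eq_add_neg a b, sub_eq_neg_add b a, ← add_sup, ← add_sup]
    _ = (a + |b|) ⊔ (-a + |b|) := by rw [sup_comm (-b) b]; rfl
    _ = (a ⊔ -a) + |b| := (sup_add _ _ _).symm
    _ = |a| + |b| := rfl

lemma absI2 (a b : Y) : |a + b| ⊓ |a - b| = |(|a| - |b|)| := by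
  letI : DistribLattice Y := AddCommGroup.toDistribLattice Y
  have han : a ⊓ -a = -|a| := by
    have h := neg_sup a (-a)
    rw [neg_neg] at h
    rw [show -|a| = -a ⊓ a from h, inf_comm]
  have hbn : b ⊓ -b = -|b| := by
    have h := neg_sup b (-b)
    rw [neg_neg] at h
    rw [show -|b| = -b ⊓ b from h, inf_comm]
  have e1 : (a + b) ⊓ (a - b) = a - |b| := by
    rw [sub_eq_add_neg a b, ← add_inf, hbn, ← sub_eq_add_neg]
  have e2 : (a + b) ⊓ -(a - b) = b - |a| := by
    rw [neg_sub, sub_eq_neg_add, ← inf_add, han, neg_add_eq_sub]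
  have e3 : -(a + b) ⊓ (a - b) = -b - |a| := by
    have h : -(a + b) ⊓ (a - b) = -|a| - b := by
      rw [neg_add, sub_eq_add_neg a b, ← inf_add, inf_comm (-a) a, han, ← sub_eq_add_neg]
    rw [h]; abel
  have e4 : -(a + b) ⊓ -(a - b) = -a - |b| := by
    rw [neg_add, neg_sub, sub_eq_neg_add, ← add_inf, inf_comm (-b) b, hbn, ← sub_eq_add_neg]
  calc |a + b| ⊓ |a - b|
      = ((a + b) ⊔ -(a + b)) ⊓ ((a - b) ⊔ -(a - b)) := rfl
    _ = (a + b) ⊓ ((a - b) ⊔ -(a - b)) ⊔ -(a + b) ⊓ ((a - b) ⊔ -(a - b)) := inf_sup_right _ _ _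
    _ = ((a + b) ⊓ (a - b) ⊔ (a + b) ⊓ -(a - b)) ⊔
          (-(a + b) ⊓ (a - b) ⊔ -(a + b) ⊓ -(a - b)) := by rw [inf_sup_left, inf_sup_left]
    _ = ((a - |b|) ⊔ (b - |a|)) ⊔ ((-b - |a|) ⊔ (-a - |b|)) := by rw [e1, e2, e3, e4]
    _ = ((a - |b|) ⊔ (-a - |b|)) ⊔ ((b - |a|) ⊔ (-b - |a|)) := by
        rw [sup_comm (-b - |a|) (-a - |b|), sup_sup_sup_comm]
    _ = ((a ⊔ -a) - |b|) ⊔ ((b ⊔ -b) - |a|) := by rw [← sup_sub, ← sup_sub]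
    _ = (|a| - |b|) ⊔ (|b| - |a|) := rfl
    _ = |(|a| - |b|)| := by rw [← neg_sub (|a|) (|b|)]; rfl

lemma disj_iff_inf (u v : Y) : Disj u v ↔ |u| ⊓ |v| = 0 := by
  have h2 : |(|u| - |v|)| = |u| ⊔ |v| - |u| ⊓ |v| := by
    rw [← sup_sub_inf_eq_abs_sub (|v|) (|u|), sup_comm, inf_comm]
  rw [disjY_iff]
  constructor
  · intro h
    have hs : |u + v| = |u| + |v| := by
      calc |u + v| = |u + v| ⊔ |u - v| := by rw [← h, sup_idem]
        _ = |u| + |v| := absI1 u v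
    have hi : |u + v| = |(|u| - |v|)| := by
      calc |u + v| = |u + v| ⊓ |u - v| := by rw [← h, inf_idem]
        _ = |(|u| - |v|)| := absI2 u v
    have key : |u| + |v| = |u| ⊔ |v| - |u| ⊓ |v| := by rw [← hs, hi, h2]
    have h3 : |u| ⊓ |v| + (|u| ⊔ |v|) = |u| ⊔ |v| - |u| ⊓ |v| := by
      rw [inf_add_sup]; exact key
    have h4 : |u| ⊓ |v| + |u| ⊓ |v| = 0 := by
      refine add_right_cancel (b := |u| ⊔ |v|) ?_
      calc |u| ⊓ |v| + |u| ⊓ |v| + (|u| ⊔ |v|) = |u| ⊓ |v| + (|u| ⊓ |v| + (|u| ⊔ |v|)) := by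
            abel
        _ = |u| ⊓ |v| + (|u| ⊔ |v| - |u| ⊓ |v|) := by rw [h3]
        _ = |u| ⊔ |v| := by abel
        _ = 0 + (|u| ⊔ |v|) := (zero_add _).symm
    have h0 : (0 : Y) ≤ |u| ⊓ |v| := le_inf (abs_nonneg u) (abs_nonneg v)
    refine le_antisymm ?_ h0
    calc |u| ⊓ |v| = |u| ⊓ |v| + 0 := (add_zero _).symm
      _ ≤ |u| ⊓ |v| + |u| ⊓ |v| := add_le_add_right h0 _
      _ = 0 := h4
  · intro h
    have heq : |u + v| ⊔ |u - v| = |u + v| ⊓ |u - v| := by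
      rw [absI1, absI2, h2, h, sub_zero, ← inf_add_sup (|u|) (|v|), h, zero_add]
    exact le_antisymm (le_sup_left.trans (heq.le.trans inf_le_right))
      (le_sup_right.trans (heq.le.trans inf_le_left))

lemma dcomp_singleton_abs (v : Y) : dcomp {v} = dcomp ({|v|} : Set Y) := by
  ext u
  simp only [dcomp, Set.mem_setOf_eq, Set.mem_singleton_iff, forall_eq]
  rw [disj_iff_inf, disj_iff_inf, abs_abs]

end LatAux

/-- For a fordable pre-Riesz space X and non-empty S ⊆ X, the band generated by
i(S) in Y is the smallest extension band of the band generated by S in X. -/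
theorem stmt_12 {X Y : Type*} [AddCommGroup X] [PartialOrder X] [CovariantClass X X (· + ·) (· ≤ ·)] [Module ℝ X] [PosSMulMono ℝ X] [AddCommGroup Y] [Lattice Y] [CovariantClass Y Y (· + ·) (· ≤ ·)] [Module ℝ Y] [PosSMulMono ℝ Y]
    (i : X →ₗ[ℝ] Y) (hbi : ∀ x : X, 0 ≤ i x ↔ 0 ≤ x)
    (hdense : ∀ y : Y, IsGLB {z : Y | z ∈ Set.range i ∧ y ≤ z} y)
    (hford : ∀ y : Y, 0 ≤ y → ∃ S' : Set X, dcomp {y} = dcomp (i '' S'))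
    (S : Set X) (hne : S.Nonempty) :
    i ⁻¹' dcomp (dcomp (i '' S)) = dcomp (dcomp S) ∧
      ∀ J : Set Y, IsBand J → i ⁻¹' J = dcomp (dcomp S) →
        dcomp (dcomp (i '' S)) ⊆ J := by
  -- monotonicity transfer
  have hmono : ∀ a z : X, a ≤ z ↔ i a ≤ i z := by
    intro a z
    have h := hbi (z - a)
    rw [map_sub] at h
    rw [sub_nonneg, sub_nonneg] at h
    exact h.symm
  -- upper-bound transfer
  have hub : ∀ a z : X, z ∈ upperBounds ({a, -a} : Set X) ↔
      i z ∈ upperBounds ({i a, -(i a)} : Set Y) := by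
    intro a z
    constructor
    · intro h w hw
      simp only [Set.mem_insert_iff, Set.mem_singleton_iff] at hw
      rcases hw with rfl | rfl
      · exact (hmono _ z).1 (h (Set.mem_insert _ _))
      · rw [← map_neg]
        exact (hmono _ z).1 (h (Set.mem_insert_of_mem _ rfl))
    · intro h w hw
      simp only [Set.mem_insert_iff, Set.mem_singleton_iff] at hw
      rcases hw with rfl | rfl
      · exact (hmono _ z).2 (h (Set.mem_insert _ _))
      · refine (hmono _ z).2 ?_
        rw [map_neg]
        exact h (Set.mem_insert_of_mem _ rfl)
  have hub' : ∀ a w : X, w ∈ upperBounds ({a, -a} : Set X) ↔ |i a| ≤ i w := by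
    intro a w
    rw [hub a w, ub_pair_eq_Ici]
    exact Iff.rfl
  have hGLBset : ∀ a : X, {z : Y | z ∈ Set.range i ∧ |i a| ≤ z}
      = i '' (upperBounds {a, -a}) := by
    intro a
    ext z
    simp only [Set.mem_setOf_eq, Set.mem_image, Set.mem_range]
    constructor
    · rintro ⟨⟨w, rfl⟩, hle⟩
      exact ⟨w, (hub' a w).2 hle, rfl⟩
    · rintro ⟨w, hw, rfl⟩
      exact ⟨⟨w, rfl⟩, (hub' a w).1 hw⟩
  -- disjointness transfer
  have hdisj_iff : ∀ x y : X, Disj x y ↔ Disj (i x) (i y) := by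
    intro x y
    constructor
    · intro hD
      rw [disjY_iff]
      have hD' : upperBounds ({x + y, -(x + y)} : Set X)
          = upperBounds {x - y, -(x - y)} := hD
      have h1 := hdense (|i (x + y)|)
      have h2 := hdense (|i (x - y)|)
      have hset : {z : Y | z ∈ Set.range i ∧ |i (x + y)| ≤ z}
          = {z : Y | z ∈ Set.range i ∧ |i (x - y)| ≤ z} := by
        rw [hGLBset, hGLBset, hD']
      rw [hset] at h1
      have := h1.unique h2
      rw [map_add, map_sub] at this
      exact this
    · intro h
      have h' : upperBounds ({i (x + y), -(i (x + y))} : Set Y)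
          = upperBounds {i (x - y), -(i (x - y))} := by
        rw [map_add, map_sub]; exact h
      show upperBounds ({x + y, -(x + y)} : Set X) = upperBounds {x - y, -(x - y)}
      ext z
      rw [hub (x + y) z, hub (x - y) z, h']
  -- dcomp transfer for image sets
  have hdc : ∀ (T : Set X) (x : X), i x ∈ dcomp (i '' T) ↔ x ∈ dcomp T := by
    intro T x
    constructor
    · intro h t ht
      exact (hdisj_iff x t).2 (h (i t) ⟨t, ht, rfl⟩)
    · rintro h w ⟨t, ht, rfl⟩
      exact (hdisj_iff x t).1 (h t ht)
  constructor
  · ext x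
    simp only [Set.mem_preimage]
    constructor
    · intro h y hy
      have hyY : i y ∈ dcomp (i '' S) := (hdc S y).2 hy
      exact (hdisj_iff x y).2 (h (i y) hyY)
    · intro hx v hv
      obtain ⟨S', hS'⟩ := hford (|v|) (abs_nonneg v)
      have hv' : dcomp ({v} : Set Y) = dcomp (i '' S') := by
        rw [dcomp_singleton_abs]; exact hS'
      have hS'sub : S' ⊆ dcomp S := by
        intro s' hs' s hs
        have h1 : Disj (i s) v := disj_symm (hv (i s) ⟨s, hs, rfl⟩)
        have h2 : i s ∈ dcomp ({v} : Set Y) := by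
          intro y hy
          rw [Set.mem_singleton_iff] at hy
          subst hy
          exact h1
        rw [hv'] at h2
        have h3 : s ∈ dcomp S' := (hdc S' s).1 h2
        exact disj_symm (h3 s' hs')
      have hx' : i x ∈ dcomp (i '' S') :=
        (hdc S' x).2 (fun s' hs' => hx s' (hS'sub hs'))
      rw [← hv'] at hx'
      exact hx' v rfl
  · intro J hJ hJpre
    have hSsub : i '' S ⊆ J := by
      rintro w ⟨s, hs, rfl⟩
      have hmem : s ∈ dcomp (dcomp S) := subset_dcomp_dcomp S hs
      rw [← hJpre] at hmem
      exact hmem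
    have h2 : dcomp (dcomp (i '' S)) ⊆ dcomp (dcomp J) := dcomp_anti (dcomp_anti hSsub)
    rw [hJ.2] at h2
    exact h2
end

section
/- Let X be an Archimedean pervasive pre-Riesz space, a ∈ X, and S ⊆ X₊ a set such that sup S exists in X. If a ⊥ s for all s ∈ S, then a ⊥ sup S. -/
open Set

section Lat
variable {Y : Type*} [AddCommGroup Y] [Lattice Y] [CovariantClass Y Y (· + ·) (· ≤ ·)]

lemma double_sup (a b : Y) : (a ⊔ b) + (a ⊔ b) = (a + a) ⊔ (b + b) := by
  apply le_antisymm
  · rw [add_sup, sup_add, sup_add, sup_le_iff, sup_le_iff, sup_le_iff]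
    refine ⟨⟨le_sup_left, ?_⟩, ⟨?_, le_sup_right⟩⟩ <;>
    · have h : (0:Y) ≤ (a - b) ⊔ (b - a) := by
        have := abs_nonneg (a - b)
        rwa [abs, neg_sub] at this
      calc _ = a + b + 0 := by abel
        _ ≤ a + b + ((a - b) ⊔ (b - a)) := add_le_add_right h _
        _ = (a + b + (a - b)) ⊔ (a + b + (b - a)) := add_sup _ _ _
        _ = (a + a) ⊔ (b + b) := by rw [show a+b+(a-b) = a+a by abel, show a+b+(b-a)=b+b by abel]
  · exact sup_le (add_le_add le_sup_left le_sup_left) (add_le_add le_sup_right le_sup_right)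

lemma sup_abs_eq (p q : Y) : |p + q| ⊔ |p - q| = |p| + |q| := by
  show ((p+q) ⊔ -(p+q)) ⊔ ((p-q) ⊔ -(p-q)) = (p ⊔ -p) + (q ⊔ -q)
  rw [add_sup, sup_add, sup_add,
    show -(p+q) = -p + -q by abel, show -(p-q) = -p + q by abel, show p - q = p + -q by abel]
  ac_rfl

lemma add_abs_eq (p q : Y) : |p + q| + |p - q| = (|p| ⊔ |q|) + (|p| ⊔ |q|) := by
  rw [double_sup]
  show ((p+q) ⊔ -(p+q)) + ((p-q) ⊔ -(p-q)) = (|p| + |p|) ⊔ (|q| + |q|)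
  have h1 : |p| + |p| = (p + p) ⊔ -(p + p) := by
    show (p ⊔ -p) + (p ⊔ -p) = _
    rw [double_sup]; congr 1; abel
  have h2 : |q| + |q| = (q + q) ⊔ -(q + q) := by
    show (q ⊔ -q) + (q ⊔ -q) = _
    rw [double_sup]; congr 1; abel
  rw [h1, h2, add_sup, sup_add, sup_add,
    show (p+q)+(p-q) = p + p by abel, show (p+q)+ -(p-q) = q + q by abel,
    show -(p+q)+(p-q) = -(q+q) by abel, show -(p+q)+ -(p-q) = -(p+p) by abel]
  ac_rfl

lemma inf_abs_eq (p q : Y) : |p + q| ⊓ |p - q| = (|p| ⊔ |q|) - (|p| ⊓ |q|) := by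
  calc |p + q| ⊓ |p - q|
      = (|p + q| ⊓ |p - q| + (|p + q| ⊔ |p - q|)) - (|p + q| ⊔ |p - q|) := by abel
    _ = (|p + q| + |p - q|) - (|p| + |q|) := by rw [inf_add_sup, sup_abs_eq]
    _ = ((|p| ⊔ |q|) + (|p| ⊔ |q|)) - ((|p| ⊓ |q|) + (|p| ⊔ |q|)) := by
        rw [add_abs_eq, inf_add_sup]
    _ = (|p| ⊔ |q|) - (|p| ⊓ |q|) := by abel

lemma disj_iff_abs_eq (p q : Y) : |p| ⊓ |q| = 0 ↔ |p + q| = |p - q| := by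
  constructor
  · intro h
    have hle : |p + q| ⊔ |p - q| ≤ |p + q| ⊓ |p - q| := by
      rw [sup_abs_eq, inf_abs_eq, h, sub_zero, ← inf_add_sup |p| |q|, h, zero_add]
    exact le_antisymm ((le_sup_left).trans (hle.trans inf_le_right))
      ((le_sup_right).trans (hle.trans inf_le_left))
  · intro h
    have h1 : |p + q| ⊓ |p - q| = |p + q| ⊔ |p - q| := by rw [h, inf_idem, sup_idem]
    rw [inf_abs_eq, sup_abs_eq, ← inf_add_sup |p| |q|] at h1
    have h2 : |p| ⊓ |q| + |p| ⊓ |q| = 0 := by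
      calc |p| ⊓ |q| + |p| ⊓ |q|
          = (|p| ⊓ |q| + |p| ⊔ |q|) - ((|p| ⊔ |q|) - |p| ⊓ |q|) := by abel
        _ = (|p| ⊓ |q| + |p| ⊔ |q|) - (|p| ⊓ |q| + |p| ⊔ |q|) := by rw [h1]
        _ = 0 := by abel
    have hnn : (0:Y) ≤ |p| ⊓ |q| := le_inf (abs_nonneg p) (abs_nonneg q)
    have : |p| ⊓ |q| ≤ 0 := by
      calc |p| ⊓ |q| = |p| ⊓ |q| + 0 := by rw [add_zero]
        _ ≤ |p| ⊓ |q| + |p| ⊓ |q| := add_le_add_right hnn _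
        _ = 0 := h2
    exact le_antisymm this hnn

end Lat

section Transfer

variable {X Y : Type*} [AddCommGroup X] [PartialOrder X] [CovariantClass X X (· + ·) (· ≤ ·)]
  [Module ℝ X] [AddCommGroup Y] [Lattice Y] [CovariantClass Y Y (· + ·) (· ≤ ·)] [Module ℝ Y]

lemma imono (i : X →ₗ[ℝ] Y) (hbi : ∀ x : X, 0 ≤ i x ↔ 0 ≤ x) (z w : X) :
    z ≤ w ↔ i z ≤ i w := by
  rw [← sub_nonneg, ← sub_nonneg (b := i z), ← map_sub, hbi]

lemma ub_mem (i : X →ₗ[ℝ] Y) (hbi : ∀ x : X, 0 ≤ i x ↔ 0 ≤ x) (w z : X) :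
    z ∈ upperBounds {w, -w} ↔ |i w| ≤ i z := by
  simp only [upperBounds, Set.mem_insert_iff, Set.mem_singleton_iff, Set.mem_setOf_eq,
    abs_le']
  constructor
  · intro h
    exact ⟨(imono i hbi w z).1 (h (Or.inl rfl)), by
      have := (imono i hbi (-w) z).1 (h (Or.inr rfl)); rwa [map_neg] at this⟩
  · rintro ⟨h1, h2⟩ b hb
    rcases hb with hb | hb <;> rw [hb]
    · exact (imono i hbi w z).2 h1
    · exact (imono i hbi (-w) z).2 (by rwa [map_neg])

lemma disj_transfer (i : X →ₗ[ℝ] Y) (hbi : ∀ x : X, 0 ≤ i x ↔ 0 ≤ x)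
    (hdense : ∀ y : Y, IsGLB {z : Y | z ∈ Set.range i ∧ y ≤ z} y) (x y : X) :
    Disj x y ↔ |i (x + y)| = |i (x - y)| := by
  constructor
  · intro h
    have hset : {z : Y | z ∈ Set.range i ∧ |i (x + y)| ≤ z}
        = {z : Y | z ∈ Set.range i ∧ |i (x - y)| ≤ z} := by
      ext w
      simp only [Set.mem_setOf_eq]
      constructor
      · rintro ⟨⟨z, rfl⟩, hle⟩
        refine ⟨⟨z, rfl⟩, ?_⟩
        rw [← ub_mem i hbi]
        rw [← h]
        rw [ub_mem i hbi]
        exact hle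
      · rintro ⟨⟨z, rfl⟩, hle⟩
        refine ⟨⟨z, rfl⟩, ?_⟩
        rw [← ub_mem i hbi]
        rw [h]
        rw [ub_mem i hbi]
        exact hle
    exact IsGLB.unique (hdense _) (hset ▸ hdense _)
  · intro h
    ext z
    rw [ub_mem i hbi, ub_mem i hbi, h]

end Transfer

/-- In an Archimedean pervasive pre-Riesz space, if a ⊥ s for all s in a set S
of positive elements whose supremum exists, then a ⊥ sup S. -/
theorem stmt_13 {X Y : Type*} [AddCommGroup X] [PartialOrder X] [CovariantClass X X (· + ·) (· ≤ ·)] [Module ℝ X] [PosSMulMono ℝ X] [AddCommGroup Y] [Lattice Y] [CovariantClass Y Y (· + ·) (· ≤ ·)] [Module ℝ Y] [PosSMulMono ℝ Y]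
    (i : X →ₗ[ℝ] Y) (hbi : ∀ x : X, 0 ≤ i x ↔ 0 ≤ x)
    (hdense : ∀ y : Y, IsGLB {z : Y | z ∈ Set.range i ∧ y ≤ z} y)
    (harch : ∀ x y : X, (∀ n : ℕ, n • x ≤ y) → x ≤ 0)
    (hperv : ∀ y : Y, 0 < y → ∃ x : X, 0 < i x ∧ i x ≤ y)
    (a m : X) (S : Set X) (hpos : ∀ s ∈ S, (0 : X) ≤ s) (hsup : IsLUB S m)
    (hdisj : ∀ s ∈ S, Disj a s) : Disj a m := by
  rcases S.eq_empty_or_nonempty with hS | ⟨s₀, hs₀⟩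
  · -- S empty : m = 0
    have hub : ∀ z : X, z ∈ upperBounds S := by
      intro z; rw [hS]; exact fun b hb => absurd hb (Set.notMem_empty b)
    have h1 : m ≤ 0 := hsup.2 (hub 0)
    have h2 : (0:X) ≤ m := by
      have := hsup.2 (hub (m + m))
      rwa [le_add_iff_nonneg_left] at this
    have hm : m = 0 := le_antisymm h1 h2
    subst hm
    show upperBounds {a + 0, -(a + 0)} = upperBounds {a - 0, -(a - 0)}
    rw [add_zero, sub_zero]
  · -- S nonempty
    have hm : (0:X) ≤ m := (hpos s₀ hs₀).trans (hsup.1 hs₀)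
    have him : (0:Y) ≤ i m := (hbi m).2 hm
    rw [disj_transfer i hbi hdense, map_add, map_sub,
      ← disj_iff_abs_eq (i a) (i m), abs_of_nonneg him]
    by_contra hne
    have hu : 0 < |i a| ⊓ i m :=
      lt_of_le_of_ne (le_inf (abs_nonneg _) him) (Ne.symm hne)
    obtain ⟨x, hx, hxu⟩ := hperv _ hu
    have hxm : i x ≤ i m := hxu.trans inf_le_right
    have hxa : i x ≤ |i a| := hxu.trans inf_le_left
    have hub : m - x ∈ upperBounds S := by
      intro s hs
      have hs0 : (0:Y) ≤ i s := (hbi s).2 (hpos s hs)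
      have hd : |i a| ⊓ |i s| = 0 :=
        (disj_iff_abs_eq (i a) (i s)).2 (by
          have := (disj_transfer i hbi hdense a s).1 (hdisj s hs)
          rwa [map_add, map_sub] at this)
      have hxs : i x ⊓ i s = 0 := by
        apply le_antisymm
        · calc i x ⊓ i s ≤ |i a| ⊓ |i s| :=
                inf_le_inf hxa (le_of_eq (abs_of_nonneg hs0).symm)
            _ = 0 := hd
        · exact le_inf hx.le hs0
      have hsm : i s ≤ i m := (imono i hbi s m).1 (hsup.1 hs)
      have hsum : i s + i x ≤ i m := by
        rw [← inf_add_sup (i s) (i x), inf_comm, hxs, zero_add]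
        exact sup_le hsm hxm
      have : i s ≤ i (m - x) := by
        rw [map_sub, le_sub_iff_add_le]
        exact hsum
      exact (imono i hbi s (m - x)).2 this
    have : m ≤ m - x := hsup.2 hub
    have : i m ≤ i (m - x) := (imono i hbi m (m - x)).1 this
    rw [map_sub, le_sub_iff_add_le, add_le_iff_nonpos_right] at this
    exact absurd (lt_of_lt_of_le hx this) (lt_irrefl 0)
end

section
/- Let X be an Archimedean pre-Riesz space, Y a vector lattice, and i : X → Y a bipositive linear map. Then the following are equivalent: (1) i(X) is order dense in Y and X is pervasive; (2) i(X) is majorizing in Y and for every y ∈ Y₊ there is a set A ⊆ i(X)₊ with y = sup A. -/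
open Set

/-- Characterization of pervasiveness together with order denseness:
(1) i(X) order dense in Y and X pervasive iff
(2) i(X) majorizing in Y and every y ∈ Y₊ is the supremum of a subset of i(X)₊. -/
theorem stmt_15 {X Y : Type*} [AddCommGroup X] [PartialOrder X] [CovariantClass X X (· + ·) (· ≤ ·)] [Module ℝ X] [PosSMulMono ℝ X] [AddCommGroup Y] [Lattice Y] [CovariantClass Y Y (· + ·) (· ≤ ·)] [Module ℝ Y] [PosSMulMono ℝ Y]
    (harch : ∀ x y : X, (∀ n : ℕ, n • x ≤ y) → x ≤ 0)
    (hdir : ∀ x y : X, ∃ z : X, x ≤ z ∧ y ≤ z)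
    (i : X →ₗ[ℝ] Y) (hbi : ∀ x : X, 0 ≤ i x ↔ 0 ≤ x) :
    ((∀ y : Y, IsGLB {z : Y | z ∈ Set.range i ∧ y ≤ z} y) ∧
        (∀ y : Y, 0 < y → ∃ x : X, 0 < i x ∧ i x ≤ y)) ↔
      ((∀ y : Y, ∃ x : X, y ≤ i x) ∧
        (∀ y : Y, 0 ≤ y →
          ∃ A : Set Y, A ⊆ {a : Y | a ∈ Set.range i ∧ 0 ≤ a} ∧ IsLUB A y)) := by
  constructor
  · rintro ⟨hdense, hperv⟩
    have hile : ∀ a b : X, i a ≤ i b ↔ a ≤ b := by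
      intro a b
      rw [← sub_nonneg, ← map_sub, hbi, sub_nonneg]
    -- majorizing
    have hmaj : ∀ y : Y, ∃ x : X, y ≤ i x := by
      intro y
      by_cases hS : ({z : Y | z ∈ Set.range i ∧ y ≤ z}).Nonempty
      · obtain ⟨z, ⟨⟨x, rfl⟩, hz⟩⟩ := hS
        exact ⟨x, hz⟩
      · -- S empty, so every element is a lower bound; y is top, hence y = 0
        have hall : ∀ w : Y, w ≤ y := by
          intro w
          refine (hdense y).2 ?_
          intro z hz
          exact absurd ⟨z, hz⟩ hS
        have h1 : y ≤ 0 := (add_le_iff_nonpos_right y).mp (hall (y + y))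
        have h2 : (0 : Y) ≤ y := hall 0
        refine ⟨0, ?_⟩
        rw [map_zero]
        exact h1
    refine ⟨hmaj, ?_⟩
    intro y hy
    refine ⟨{a : Y | (a ∈ Set.range i ∧ 0 ≤ a) ∧ a ≤ y}, fun a ha => ha.1, ?_, ?_⟩
    · intro a ha; exact ha.2
    · intro u hu
      have h0A : (0 : Y) ∈ {a : Y | (a ∈ Set.range i ∧ 0 ≤ a) ∧ a ≤ y} :=
        ⟨⟨⟨0, map_zero i⟩, le_refl 0⟩, hy⟩
      have hu0 : (0 : Y) ≤ u := hu h0A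
      set m := y ⊓ u with hm
      have hm0 : (0 : Y) ≤ m := le_inf hy hu0
      set d := y - m with hd
      have hd0 : (0 : Y) ≤ d := sub_nonneg.mpr inf_le_left
      by_cases hdz : d = 0
      · have : y = m := by
          have := sub_eq_zero.mp hdz
          exact this
        rw [this]; exact inf_le_right
      · exfalso
        obtain ⟨x, hx0, hxd⟩ := hperv d (lt_of_le_of_ne hd0 (Ne.symm hdz))
        have hdy : d ≤ y := by
          rw [hd]
          exact sub_le_self y hm0
        have key : ∀ n : ℕ, 0 ≤ n • i x ∧ n • i x ≤ y := by
          intro n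
          induction n with
          | zero => simp [hy]
          | succ n ih =>
            have hnA : n • i x ∈ {a : Y | (a ∈ Set.range i ∧ 0 ≤ a) ∧ a ≤ y} :=
              ⟨⟨⟨n • x, map_nsmul i n x⟩, ih.1⟩, ih.2⟩
            have hnu : n • i x ≤ u := hu hnA
            have hnm : n • i x ≤ m := le_inf ih.2 hnu
            constructor
            · rw [succ_nsmul]
              exact add_nonneg ih.1 (le_of_lt hx0)
            · rw [succ_nsmul]
              calc n • i x + i x ≤ m + d := add_le_add hnm hxd
                _ = y := by rw [hd]; abel
        obtain ⟨x', hx'⟩ := hmaj y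
        have : ∀ n : ℕ, n • x ≤ x' := by
          intro n
          rw [← hile]
          rw [map_nsmul]
          exact le_trans (key n).2 hx'
        have hxle : x ≤ 0 := harch x x' this
        have : i x ≤ 0 := by
          rw [← map_zero i, hile]; exact hxle
        exact absurd hx0 this.not_gt
  · rintro ⟨hmaj, hsup⟩
    constructor
    · -- order dense
      intro y
      obtain ⟨x0, hx0⟩ := hmaj y
      have hpos : (0 : Y) ≤ i x0 - y := sub_nonneg.mpr hx0
      obtain ⟨A, hAsub, hA⟩ := hsup (i x0 - y) hpos
      constructor
      · intro z hz; exact hz.2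
      · intro w hw
        -- for each a ∈ A, i x0 - a ∈ S
        have hstep : ∀ a ∈ A, a ≤ i x0 - w := by
          intro a ha
          have hay : a ≤ i x0 - y := hA.1 ha
          obtain ⟨⟨xa, hxa⟩, ha0⟩ := hAsub ha
          have hmem : i x0 - a ∈ {z : Y | z ∈ Set.range i ∧ y ≤ z} := by
            refine ⟨⟨x0 - xa, ?_⟩, ?_⟩
            · rw [map_sub, hxa]
            · rw [le_sub_iff_add_le, ← le_sub_iff_add_le']
              exact hay
          have := hw hmem
          rw [le_sub_iff_add_le, ← le_sub_iff_add_le']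
          exact this
        have := hA.2 hstep
        have : i x0 - y ≤ i x0 - w := this
        rwa [sub_le_sub_iff_left] at this
    · -- pervasive
      intro y hy
      obtain ⟨A, hAsub, hA⟩ := hsup y (le_of_lt hy)
      by_cases hne : ∃ a ∈ A, a ≠ 0
      · obtain ⟨a, haA, ha0⟩ := hne
        obtain ⟨⟨x, hxa⟩, hapos⟩ := hAsub haA
        refine ⟨x, ?_, ?_⟩
        · rw [hxa]
          exact lt_of_le_of_ne hapos (Ne.symm ha0)
        · rw [hxa]
          exact hA.1 haA
      · exfalso
        push_neg at hne
        have hub : (0 : Y) ∈ upperBounds A := by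
          intro a ha
          rw [hne a ha]
        have := hA.2 hub
        exact absurd hy this.not_gt
end

section
/- Let X be an Archimedean pervasive pre-Riesz space with vector lattice cover (Y, i), let I ⊆ X be a directed ideal, and let Î ⊆ Y be its smallest extension ideal. Then i(I) is order dense in Î; consequently (Î, i|_I) is a vector lattice cover of I, and I is pervasive. -/
open Set

section Aux

variable {X Y : Type*} [AddCommGroup X] [PartialOrder X]
  [CovariantClass X X (· + ·) (· ≤ ·)] [Module ℝ X] [PosSMulMono ℝ X]
  [AddCommGroup Y] [Lattice Y] [CovariantClass Y Y (· + ·) (· ≤ ·)]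
  [Module ℝ Y] [PosSMulMono ℝ Y]

lemma half_nonneg {Z : Type*} [AddCommGroup Z] [PartialOrder Z] [Module ℝ Z]
    [PosSMulMono ℝ Z] (u : Z) (h : 0 ≤ u + u) : 0 ≤ u := by
  have h2 : ((1:ℝ)/2) • (0:Z) ≤ ((1:ℝ)/2) • (u + u) :=
    smul_le_smul_of_nonneg_left h (by norm_num)
  have : ((1:ℝ)/2) • (u + u) = u := by
    rw [smul_add, ← add_smul]; norm_num
  rwa [smul_zero, this] at h2

lemma pm_smul {Z : Type*} [AddCommGroup Z] [PartialOrder Z] [Module ℝ Z]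
    [PosSMulMono ℝ Z] (r : ℝ) (y v : Z) (h1 : y ≤ v) (h2 : -y ≤ v) :
    r • y ≤ |r| • v := by
  rcases le_total 0 r with hr | hr
  · rw [abs_of_nonneg hr]; exact smul_le_smul_of_nonneg_left h1 hr
  · rw [abs_of_nonpos hr]
    have : r • y = (-r) • (-y) := by simp
    rw [this]
    exact smul_le_smul_of_nonneg_left h2 (by linarith)

end Aux

/-- For a directed ideal I in an Archimedean pervasive pre-Riesz space, i(I) is
order dense in the smallest extension ideal Î (so Î is a vector lattice cover
of I), and I is pervasive (in Î). -/

theorem stmt_16 {X Y : Type*} [AddCommGroup X] [PartialOrder X] [CovariantClass X X (· + ·) (· ≤ ·)] [Module ℝ X] [PosSMulMono ℝ X] [AddCommGroup Y] [Lattice Y] [CovariantClass Y Y (· + ·) (· ≤ ·)] [Module ℝ Y] [PosSMulMono ℝ Y]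
    (i : X →ₗ[ℝ] Y) (hbi : ∀ x : X, 0 ≤ i x ↔ 0 ≤ x)
    (hdense : ∀ y : Y, IsGLB {z : Y | z ∈ Set.range i ∧ y ≤ z} y)
    (harch : ∀ x y : X, (∀ n : ℕ, n • x ≤ y) → x ≤ 0)
    (hperv : ∀ y : Y, 0 < y → ∃ x : X, 0 < i x ∧ i x ≤ y)
    (I : Set X) (hI : IsIdeal I) (hdir : IsDirectedSet I)
    (Ihat : Set Y) (hIhat : IsIdeal Ihat) (hext : i ⁻¹' Ihat = I)
    (hsmall : ∀ J : Set Y, IsIdeal J → i ⁻¹' J = I → Ihat ⊆ J) :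
    OrderDenseIn (i '' I) Ihat ∧
      ∀ y ∈ Ihat, 0 < y → ∃ x ∈ I, 0 < i x ∧ i x ≤ y := by
  classical
  -- basic monotonicity facts about `i`
  have mono : ∀ a b : X, a ≤ b → i a ≤ i b := by
    intro a b h
    have h0 : 0 ≤ b - a := sub_nonneg.mpr h
    have := (hbi (b - a)).mpr h0
    rw [map_sub] at this
    exact sub_nonneg.mp this
  have monorev : ∀ a b : X, i a ≤ i b → a ≤ b := by
    intro a b h
    have h0 : 0 ≤ i b - i a := sub_nonneg.mpr h
    rw [← map_sub] at h0
    exact sub_nonneg.mp ((hbi (b - a)).mp h0)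
  -- membership in pmUB
  have pm_mem : ∀ (w u : Y), u ∈ pmUB w → w ≤ u ∧ -w ≤ u := by
    intro w u hu
    exact ⟨hu (Set.mem_insert _ _), hu (Set.mem_insert_of_mem _ rfl)⟩
  have pm_intro : ∀ (w u : Y), w ≤ u → -w ≤ u → u ∈ pmUB w := by
    intro w u h1 h2 v hv
    rcases hv with rfl | hv
    · exact h1
    · rw [Set.mem_singleton_iff] at hv; subst hv; exact h2
  have pm_memX : ∀ (w u : X), u ∈ pmUB w → w ≤ u ∧ -w ≤ u := by
    intro w u hu
    exact ⟨hu (Set.mem_insert _ _), hu (Set.mem_insert_of_mem _ rfl)⟩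
  have pm_introX : ∀ (w u : X), w ≤ u → -w ≤ u → u ∈ pmUB w := by
    intro w u h1 h2 v hv
    rcases hv with rfl | hv
    · exact h1
    · rw [Set.mem_singleton_iff] at hv; subst hv; exact h2
  -- negation stays in I
  have hnegI : ∀ x ∈ I, -x ∈ I := by
    intro x hx
    have := hI.1.2.2 (-1) x hx
    rwa [neg_one_smul] at this
  -- the auxiliary ideal J
  set J : Set Y := {y : Y | ∃ z ∈ I, y ≤ i z ∧ -y ≤ i z} with hJdef
  have hJideal : IsIdeal J := by
    constructor
    · refine ⟨⟨0, hI.1.1, by simp⟩, ?_, ?_⟩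
      · rintro y₁ ⟨z₁, hz₁, h11, h12⟩ y₂ ⟨z₂, hz₂, h21, h22⟩
        refine ⟨z₁ + z₂, hI.1.2.1 z₁ hz₁ z₂ hz₂, ?_, ?_⟩
        · rw [map_add]; exact add_le_add h11 h21
        · rw [map_add, neg_add]; exact add_le_add h12 h22
      · rintro r y ⟨z, hz, h1, h2⟩
        refine ⟨|r| • z, hI.1.2.2 |r| z hz, ?_, ?_⟩
        · rw [map_smul]; exact pm_smul r y (i z) h1 h2
        · rw [map_smul, ← smul_neg]
          exact pm_smul r (-y) (i z) h2 (by simpa using h1)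
    · rintro y' y ⟨z, hz, h1, h2⟩ hsub
      have hz' : i z ∈ pmUB y := pm_intro y (i z) h1 h2
      obtain ⟨h1', h2'⟩ := pm_mem y' (i z) (hsub hz')
      exact ⟨z, hz, h1', h2'⟩
  have hJext : i ⁻¹' J = I := by
    ext x
    constructor
    · rintro ⟨z, hz, h1, h2⟩
      have hx1 : x ≤ z := monorev x z h1
      have hx2 : -x ≤ z := monorev (-x) z (by rwa [map_neg])
      refine hI.2 x z hz ?_
      intro u hu
      obtain ⟨hu1, hu2⟩ := pm_memX z u hu
      exact pm_introX x u (hx1.trans hu1) (hx2.trans hu1)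
    · intro hx
      obtain ⟨z, hz, hz1, hz2⟩ := hdir x hx (-x) (hnegI x hx)
      exact ⟨z, hz, mono x z hz1, by rw [← map_neg]; exact mono (-x) z hz2⟩
  have hIJ : Ihat ⊆ J := hsmall J hJideal hJext
  -- solidity: 0 ≤ w ≤ v with v ∈ Ihat implies w ∈ Ihat
  have hsolid : ∀ v ∈ Ihat, ∀ w : Y, 0 ≤ w → w ≤ v → w ∈ Ihat := by
    intro v hv w hw0 hwv
    refine hIhat.2 w v hv ?_
    intro u hu
    obtain ⟨hu1, hu2⟩ := pm_mem v u hu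
    exact pm_intro w u (hwv.trans hu1) ((neg_nonpos.mpr hw0).trans (hw0.trans (hwv.trans hu1)))
  constructor
  · -- order density
    intro y hy
    constructor
    · rintro w ⟨-, hw⟩
      exact hw
    · intro z hz hzlb
      -- y has a majorant in i(I)
      obtain ⟨a, ha, hya, hya'⟩ := hIJ hy
      by_contra hzy
      set v : Y := z ⊔ y - y with hvdef
      have hv0 : 0 ≤ v := sub_nonneg.mpr le_sup_right
      have hvpos : 0 < v := by
        rcases hv0.lt_or_eq with h | h
        · exact h
        · exfalso
          apply hzy
          have : z ⊔ y = y := by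
            have := h.symm
            rw [hvdef, sub_eq_zero] at this
            exact this
          calc z ≤ z ⊔ y := le_sup_left
          _ = y := this
      obtain ⟨x₀, hx₀pos, hx₀v⟩ := hperv v hvpos
      -- v ∈ Ihat
      have hzyI : z - y ∈ Ihat := by
        have hmy : (-1 : ℝ) • y ∈ Ihat := hIhat.1.2.2 (-1) y hy
        rw [neg_one_smul] at hmy
        have := hIhat.1.2.1 z hz (-y) hmy
        rwa [← sub_eq_add_neg] at this
      have hvI : v ∈ Ihat := by
        refine hIhat.2 v (z - y) hzyI ?_
        intro u hu
        obtain ⟨hu1, hu2⟩ := pm_mem (z - y) u hu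
        have hu0 : 0 ≤ u := half_nonneg u (by
          have := add_le_add hu1 hu2
          simpa using this)
        have hvu : v ≤ u := by
          rw [hvdef, sub_le_iff_le_add, sup_le_iff]
          constructor
          · rw [← sub_le_iff_le_add]; exact hu1
          · exact le_add_of_nonneg_left hu0
        exact pm_intro v u hvu ((neg_nonpos.mpr hv0).trans (hv0.trans hvu))
      have hx₀I : x₀ ∈ I := by
        rw [← hext]
        exact hsolid v hvI (i x₀) hx₀pos.le hx₀v
      -- the Archimedean induction
      have key : ∀ n : ℕ, y ≤ i a - n • i x₀ := by
        intro n
        induction n with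
        | zero => simpa using hya
        | succ n ih =>
          set b : X := a + (-(n : ℝ)) • x₀ with hbdef
          have hbI : b ∈ I := hI.1.2.1 a ha _ (hI.1.2.2 (-(n : ℝ)) x₀ hx₀I)
          have hib : i b = i a - n • i x₀ := by
            rw [hbdef, map_add, map_smul, neg_smul, ← sub_eq_add_neg,
              Nat.cast_smul_eq_nsmul]
          have hyb : y ≤ i b := by rw [hib]; exact ih
          have hzb : z ≤ i b := hzlb ⟨⟨b, hbI, rfl⟩, hyb⟩
          have hsup : z ⊔ y ≤ i b := sup_le hzb hyb
          have h1 : y + i x₀ ≤ i a - n • i x₀ := by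
            have : y + i x₀ ≤ z ⊔ y := by
              rw [hvdef] at hx₀v
              have := le_sub_iff_add_le.mp hx₀v
              rwa [add_comm] at this
            calc y + i x₀ ≤ z ⊔ y := this
            _ ≤ i b := hsup
            _ = i a - n • i x₀ := hib
          rw [le_sub_iff_add_le] at h1 ⊢
          calc y + (n + 1) • i x₀ = y + i x₀ + n • i x₀ := by
                rw [succ_nsmul]; abel
          _ ≤ i a := h1
      have keyX : ∀ n : ℕ, n • x₀ ≤ a + a := by
        intro n
        have h1 : (n : ℕ) • i x₀ ≤ i a - y := by
          have := key n
          rwa [le_sub_iff_add_le, add_comm, ← le_sub_iff_add_le] at this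
        have h2 : i a - y ≤ i a + i a := by
          rw [sub_eq_add_neg]
          exact add_le_add_right hya' _
        have h3 : i (n • x₀) ≤ i (a + a) := by
          rw [map_add, map_nsmul]
          exact h1.trans h2
        exact monorev _ _ h3
      have : x₀ ≤ 0 := harch x₀ (a + a) keyX
      have : i x₀ ≤ 0 := by
        have := mono x₀ 0 this
        rwa [map_zero] at this
      exact (hx₀pos.not_ge this).elim
  · -- pervasiveness
    intro y hy hypos
    obtain ⟨x, hx1, hx2⟩ := hperv y hypos
    refine ⟨x, ?_, hx1, hx2⟩
    rw [← hext]
    exact hsolid y hy (i x) hx1.le hx2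
end

section
/- Let X be an Archimedean pervasive pre-Riesz space with Dedekind completion X^δ, let I ⊆ X be a directed ideal, and let Î be the smallest extension ideal of I in X^δ. Then Î is Dedekind complete and i(I) is order dense in Î, i.e., (Î, i|_I) is the Dedekind completion of I. -/
open Set

lemma mem_pmUB {Z : Type*} [AddCommGroup Z] [PartialOrder Z] [Module ℝ Z] {a z : Z} :
    z ∈ pmUB a ↔ a ≤ z ∧ -a ≤ z := by
  constructor
  · intro h
    exact ⟨h (Set.mem_insert _ _), h (Set.mem_insert_iff.2 (Or.inr rfl))⟩
  · rintro ⟨h1, h2⟩ t ht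
    rcases Set.mem_insert_iff.1 ht with rfl | ht
    · exact h1
    · rw [Set.mem_singleton_iff.1 ht]; exact h2

/-- For a directed ideal I in an Archimedean pervasive pre-Riesz space and its
smallest extension ideal Î in the Dedekind completion: Î is Dedekind complete
(suprema within Î of non-empty subsets bounded above in Î exist) and i(I) is
order dense in Î, i.e. Î is the Dedekind completion of I. -/
theorem stmt_18 {X Y : Type*} [AddCommGroup X] [PartialOrder X] [CovariantClass X X (· + ·) (· ≤ ·)] [Module ℝ X] [PosSMulMono ℝ X] [AddCommGroup Y] [Lattice Y] [CovariantClass Y Y (· + ·) (· ≤ ·)] [Module ℝ Y] [PosSMulMono ℝ Y]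
    (i : X →ₗ[ℝ] Y) (hbi : ∀ x : X, 0 ≤ i x ↔ 0 ≤ x)
    (hdense : ∀ y : Y, IsGLB {z : Y | z ∈ Set.range i ∧ y ≤ z} y)
    (harch : ∀ x y : X, (∀ n : ℕ, n • x ≤ y) → x ≤ 0)
    (hperv : ∀ y : Y, 0 < y → ∃ x : X, 0 < i x ∧ i x ≤ y)
    (hded : ∀ A : Set Y, A.Nonempty → BddAbove A → ∃ m : Y, IsLUB A m)
    (I : Set X) (hI : IsIdeal I) (hdir : IsDirectedSet I)
    (Ihat : Set Y) (hIhat : IsIdeal Ihat) (hext : i ⁻¹' Ihat = I)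
    (hsmall : ∀ J : Set Y, IsIdeal J → i ⁻¹' J = I → Ihat ⊆ J) :
    (∀ A : Set Y, A ⊆ Ihat → A.Nonempty → (∃ b ∈ Ihat, b ∈ upperBounds A) →
      ∃ m ∈ Ihat, m ∈ upperBounds A ∧ ∀ b ∈ Ihat, b ∈ upperBounds A → m ≤ b) ∧
    OrderDenseIn (i '' I) Ihat := by
  obtain ⟨⟨hI0, hIadd, hIsmul⟩, hIsolid⟩ := hI
  obtain ⟨⟨hIh0, hIhadd, hIhsmul⟩, hIhsolid⟩ := hIhat
  -- i is monotone and order reflecting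
  have himono : ∀ {a b : X}, a ≤ b → i a ≤ i b := by
    intro a b h
    have h1 : (0 : Y) ≤ i (b - a) := (hbi (b - a)).2 (sub_nonneg.2 h)
    rw [map_sub] at h1
    exact sub_nonneg.1 h1
  have hneg : ∀ {a b : Y}, a ≤ b → -b ≤ -a := by
    intro a b h
    calc -b = (-a + -b) + a := by abel
      _ ≤ (-a + -b) + b := add_le_add_right h _
      _ = -a := by abel
  have himono' : ∀ {a b : X}, i a ≤ i b → a ≤ b := by
    intro a b h
    have h1 : (0 : Y) ≤ i (b - a) := by rw [map_sub]; exact sub_nonneg.2 h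
    exact sub_nonneg.1 ((hbi _).1 h1)
  -- The ideal J = {y : ∃ x ∈ I, ±y ≤ i x}
  set J : Set Y := {y : Y | ∃ x ∈ I, y ≤ i x ∧ -y ≤ i x} with hJdef
  have hJmem : ∀ y : Y, y ∈ J ↔ ∃ x ∈ I, y ≤ i x ∧ -y ≤ i x := fun y => Iff.rfl
  have hJideal : IsIdeal J := by
    refine ⟨⟨⟨0, hI0, by simp⟩, ?_, ?_⟩, ?_⟩
    · rintro a ⟨xa, hxa, ha1, ha2⟩ b ⟨xb, hxb, hb1, hb2⟩
      refine ⟨xa + xb, hIadd _ hxa _ hxb, ?_, ?_⟩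
      · rw [map_add]; exact add_le_add ha1 hb1
      · rw [map_add, neg_add]; exact add_le_add ha2 hb2
    · rintro r a ⟨xa, hxa, ha1, ha2⟩
      rcases le_total 0 r with hr | hr
      · refine ⟨r • xa, hIsmul r _ hxa, ?_, ?_⟩
        · rw [map_smul]; exact smul_le_smul_of_nonneg_left ha1 hr
        · rw [map_smul, ← smul_neg]; exact smul_le_smul_of_nonneg_left ha2 hr
      · refine ⟨(-r) • xa, hIsmul (-r) _ hxa, ?_, ?_⟩
        · rw [map_smul]
          have : r • a = (-r) • (-a) := by rw [neg_smul, smul_neg, neg_neg]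
          rw [this]
          exact smul_le_smul_of_nonneg_left ha2 (neg_nonneg.2 hr)
        · rw [map_smul]
          have : -(r • a) = (-r) • a := by rw [neg_smul]
          rw [this]
          exact smul_le_smul_of_nonneg_left ha1 (neg_nonneg.2 hr)
    · rintro a b ⟨xb, hxb, hb1, hb2⟩ hsub
      have hmem : i xb ∈ pmUB b := mem_pmUB.2 ⟨hb1, hb2⟩
      have := mem_pmUB.1 (hsub hmem)
      exact ⟨xb, hxb, this.1, this.2⟩
  have hJpre : i ⁻¹' J = I := by
    ext x
    constructor
    · rintro ⟨w, hw, h1, h2⟩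
      rw [← map_neg] at h2
      refine hIsolid x w hw ?_
      intro t ht
      have htw := (mem_pmUB.1 ht).1
      exact mem_pmUB.2 ⟨le_trans (himono' h1) htw, le_trans (himono' h2) htw⟩
    · intro hx
      have hnx : -x ∈ I := by
        have := hIsmul (-1) x hx
        rwa [neg_one_smul] at this
      obtain ⟨w, hw, h1, h2⟩ := hdir x hx (-x) hnx
      exact ⟨w, hw, himono h1, by rw [← map_neg]; exact himono h2⟩
  have hsub := hsmall J hJideal hJpre
  constructor
  · -- Dedekind completeness of Ihat
    rintro A hA ⟨a, ha⟩ ⟨b, hbI, hb⟩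
    obtain ⟨m, hm⟩ := hded A ⟨a, ha⟩ ⟨b, hb⟩
    have haI : a ∈ Ihat := hA ha
    -- |a| := a ⊔ -a ∈ Ihat, |b| ∈ Ihat
    have habs : ∀ c ∈ Ihat, c ⊔ -c ∈ Ihat := by
      intro c hc
      refine hIhsolid (c ⊔ -c) c hc ?_
      intro t ht
      obtain ⟨h1, h2⟩ := mem_pmUB.1 ht
      refine mem_pmUB.2 ⟨sup_le h1 h2, ?_⟩
      calc -(c ⊔ -c) ≤ -(-c) := hneg le_sup_right
        _ = c := neg_neg c
        _ ≤ t := h1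
    have haabs := habs a haI
    have hbabs := habs b hbI
    have habs_nonneg : ∀ c : Y, (0 : Y) ≤ c ⊔ -c := by
      intro c
      have h2 : (0 : Y) ≤ (c ⊔ -c) + (c ⊔ -c) := by
        calc (0 : Y) = c + -c := by rw [add_neg_cancel]
          _ ≤ (c ⊔ -c) + (c ⊔ -c) := add_le_add le_sup_left le_sup_right
      have := smul_le_smul_of_nonneg_left h2 (by norm_num : (0:ℝ) ≤ 1/2)
      rwa [smul_zero, smul_add, ← add_smul, (by norm_num : (1:ℝ)/2 + 1/2 = 1), one_smul] at this
    have hcI : (a ⊔ -a) + (b ⊔ -b) ∈ Ihat := hIhadd _ haabs _ hbabs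
    have hmI : m ∈ Ihat := by
      refine hIhsolid m _ hcI ?_
      intro t ht
      obtain ⟨h1, _⟩ := mem_pmUB.1 ht
      refine mem_pmUB.2 ⟨?_, ?_⟩
      · calc m ≤ b := hm.2 hb
          _ ≤ b ⊔ -b := le_sup_left
          _ ≤ (a ⊔ -a) + (b ⊔ -b) := le_add_of_nonneg_left (habs_nonneg a)
          _ ≤ t := h1
      · calc -m ≤ -a := hneg (hm.1 ha)
          _ ≤ a ⊔ -a := le_sup_right
          _ ≤ (a ⊔ -a) + (b ⊔ -b) := le_add_of_nonneg_right (habs_nonneg b)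
          _ ≤ t := h1
    exact ⟨m, hmI, hm.1, fun b' _ hb' => hm.2 hb'⟩
  · -- order density of i(I) in Ihat
    intro y hy
    refine ⟨fun w hw => hw.2, ?_⟩
    intro z _ hzlb
    obtain ⟨x₀, hx₀, hy1, hy2⟩ := hsub hy
    by_contra hzy
    set w := z ⊔ y with hw
    have hne : w ≠ y := fun h => hzy (sup_eq_right.mp h)
    have hyw : 0 < w - y := sub_pos.2 (lt_of_le_of_ne le_sup_right (Ne.symm hne))
    obtain ⟨u, hu, hu2⟩ := hperv (w - y) hyw
    have hzix₀ : z ≤ i x₀ := hzlb ⟨⟨x₀, hx₀, rfl⟩, hy1⟩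
    have hwx₀ : w ≤ i x₀ := sup_le hzix₀ hy1
    -- u ∈ I
    have huI : u ∈ I := by
      rw [← hJpre]
      refine ⟨x₀ + x₀, hIadd _ hx₀ _ hx₀, ?_, ?_⟩
      · calc i u ≤ w - y := hu2
          _ ≤ i x₀ - y := sub_le_sub_right hwx₀ y
          _ = i x₀ + -y := sub_eq_add_neg _ _
          _ ≤ i x₀ + i x₀ := add_le_add_right hy2 _
          _ = i (x₀ + x₀) := (map_add i x₀ x₀).symm
      · calc -(i u) ≤ 0 := neg_nonpos.2 hu.le
          _ ≤ i u := hu.le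
          _ ≤ w - y := hu2
          _ ≤ i x₀ - y := sub_le_sub_right hwx₀ y
          _ = i x₀ + -y := sub_eq_add_neg _ _
          _ ≤ i x₀ + i x₀ := add_le_add_right hy2 _
          _ = i (x₀ + x₀) := (map_add i x₀ x₀).symm
    have key : ∀ n : ℕ, x₀ - n • u ∈ I ∧ y ≤ i (x₀ - n • u) := by
      intro n
      induction n with
      | zero => simpa using ⟨hx₀, hy1⟩
      | succ n ih =>
        have hnu : -u ∈ I := by
          have := hIsmul (-1) u huI
          rwa [neg_one_smul] at this
        have hmem : x₀ - (n + 1) • u ∈ I := by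
          have h := hIadd _ ih.1 _ hnu
          have heq : x₀ - n • u + -u = x₀ - (n + 1) • u := by
            rw [succ_nsmul]; abel
          rwa [heq] at h
        have hzle : z ≤ i (x₀ - n • u) := hzlb ⟨⟨_, ih.1, rfl⟩, ih.2⟩
        have hwle : w ≤ i (x₀ - n • u) := sup_le hzle ih.2
        have hstep : y ≤ i (x₀ - n • u) - i u := by
          have h := sub_le_sub hwle hu2
          rwa [sub_sub_cancel] at h
        refine ⟨hmem, ?_⟩
        calc y ≤ i (x₀ - n • u) - i u := hstep
          _ = i (x₀ - n • u - u) := (map_sub i _ _).symm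
          _ = i (x₀ - (n + 1) • u) := by rw [succ_nsmul, sub_sub]
    have hbound : ∀ n : ℕ, n • u ≤ x₀ + x₀ := by
      intro n
      have h := (key n).2
      rw [map_sub] at h
      have h2 : i (n • u) ≤ i x₀ - y := le_sub_comm.1 h
      have h3 : i x₀ - y ≤ i (x₀ + x₀) := by
        calc i x₀ - y = i x₀ + -y := sub_eq_add_neg _ _
          _ ≤ i x₀ + i x₀ := add_le_add_right hy2 _
          _ = i (x₀ + x₀) := (map_add i x₀ x₀).symm
      exact himono' (le_trans h2 h3)
    have hule : u ≤ 0 := harch u (x₀ + x₀) hbound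
    have : i u ≤ 0 := by
      have := himono hule
      rwa [map_zero] at this
    exact hu.not_ge this
end
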